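/- (Noether's theorem for generalized symmetries.) Let L : J → ℝ be a smooth Lagrangian and let X^i : J → ℝ be smooth components of a generalized symmetry: there are smooth F^α : J → ℝ (1 ≤ α ≤ k) such that for every solution φ : ℝ^k → ℝ^n of the Euler–Lagrange equations of L and every x ∈ ℝ^k, [X^i ∂L/∂q^i + D_α X^i · ∂L/∂v^i_α](at j¹φ(x)) = ∑_α [D_α F^α](at j¹φ(x)), where for a smooth H : J → ℝ the operator D_α along j¹φ is D_α H = ∂H/∂x^α + ∂φ^j/∂x^α · ∂H/∂q^j + ∂²φ^j/∂x^α∂x^β · ∂H/∂v^j_β, all evaluated at j¹φ(x). Then the functions G^α = F^α − X^i ∂L/∂v^i_α define a conservation law for the Euler–Lagrange equations of L. -/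

import Mathlib

open Function

noncomputable section

/-- The first jet space `J = ℝᵏ × ℝⁿ × (Fin n → Fin k → ℝ)`,
with coordinates `(xᵅ, qⁱ, vⁱ_α)`. -/
abbrev Jet (k n : ℕ) : Type :=
  (Fin k → ℝ) × (Fin n → ℝ) × (Fin n → Fin k → ℝ)

variable {k n : ℕ}

/-- Partial derivative `∂F/∂xᵅ` of a function on the jet space. -/
noncomputable def pdX (F : Jet k n → ℝ) (α : Fin k) (z : Jet k n) : ℝ :=
  deriv (fun t => F (Function.update z.1 α t, z.2.1, z.2.2)) (z.1 α)

/-- Partial derivative `∂F/∂qⁱ` of a function on the jet space. -/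
noncomputable def pdQ (F : Jet k n → ℝ) (i : Fin n) (z : Jet k n) : ℝ :=
  deriv (fun t => F (z.1, Function.update z.2.1 i t, z.2.2)) (z.2.1 i)

/-- Partial derivative `∂F/∂vⁱ_α` of a function on the jet space. -/
noncomputable def pdV (F : Jet k n → ℝ) (i : Fin n) (α : Fin k) (z : Jet k n) : ℝ :=
  deriv (fun t => F (z.1, z.2.1,
    Function.update z.2.2 i (Function.update (z.2.2 i) α t))) (z.2.2 i α)

/-- Partial derivative `∂φⁱ/∂xᵅ` of a map `φ : ℝᵏ → ℝⁿ`. -/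
noncomputable def pD (φ : (Fin k → ℝ) → (Fin n → ℝ)) (i : Fin n) (α : Fin k)
    (x : Fin k → ℝ) : ℝ :=
  deriv (fun t => φ (Function.update x α t) i) (x α)

/-- Second partial derivative `∂²φⁱ/∂xᵅ∂xᵝ` of a map `φ : ℝᵏ → ℝⁿ`. -/
noncomputable def pD2 (φ : (Fin k → ℝ) → (Fin n → ℝ)) (i : Fin n) (α β : Fin k)
    (x : Fin k → ℝ) : ℝ :=
  deriv (fun t => pD φ i β (Function.update x α t)) (x α)

/-- First prolongation `j¹φ : ℝᵏ → J` of `φ : ℝᵏ → ℝⁿ`. -/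
noncomputable def j1 (φ : (Fin k → ℝ) → (Fin n → ℝ)) (x : Fin k → ℝ) : Jet k n :=
  (x, φ x, fun i α => pD φ i α x)

/-- `φ` is a smooth solution of the Euler–Lagrange equations of the Lagrangian `L`:
`∑_α ∂/∂xᵅ[(∂L/∂vⁱ_α) ∘ j¹φ] = (∂L/∂qⁱ) ∘ j¹φ` for all `i`. -/
def IsELSolution (L : Jet k n → ℝ) (φ : (Fin k → ℝ) → (Fin n → ℝ)) : Prop :=
  ContDiff ℝ (⊤ : ℕ∞) φ ∧
  ∀ (i : Fin n) (x : Fin k → ℝ),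
    (∑ α : Fin k, deriv (fun t => pdV L i α (j1 φ (Function.update x α t))) (x α))
      = pdQ L i (j1 φ x)

/-- `G = (G¹, …, Gᵏ)` is a conservation law for the Euler–Lagrange equations of `L`:
`∑_α ∂/∂xᵅ(Gᵅ ∘ j¹φ) = 0` for every solution `φ`. -/
def IsConservationLaw (L : Jet k n → ℝ) (G : Fin k → Jet k n → ℝ) : Prop :=
  ∀ φ : (Fin k → ℝ) → (Fin n → ℝ), IsELSolution L φ →
    ∀ x : Fin k → ℝ,
      (∑ α : Fin k, deriv (fun t => G α (j1 φ (Function.update x α t))) (x α)) = 0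

/-- The total-derivative operator `D_α` along `j¹φ`:
`D_α H = ∂H/∂xᵅ + ∂φʲ/∂xᵅ ∂H/∂qʲ + ∂²φʲ/∂xᵅ∂xᵝ ∂H/∂vʲ_β`, all at `j¹φ(x)`. -/
noncomputable def Dalong (φ : (Fin k → ℝ) → (Fin n → ℝ)) (x : Fin k → ℝ)
    (α : Fin k) (H : Jet k n → ℝ) : ℝ :=
  pdX H α (j1 φ x) + (∑ j : Fin n, pD φ j α x * pdQ H j (j1 φ x))
    + ∑ j : Fin n, ∑ β : Fin k, pD2 φ j α β x * pdV H j β (j1 φ x)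

section Auxiliary

variable {k n : ℕ}

/-- Coordinate vector in the `x` directions. -/
def eX (α : Fin k) : Jet k n := (Pi.single α 1, 0, 0)

/-- Coordinate vector in the `q` directions. -/
def eQ (i : Fin n) : Jet k n := (0, Pi.single i 1, 0)

/-- Coordinate vector in the `v` directions. -/
def eV (i : Fin n) (α : Fin k) : Jet k n := (0, 0, Pi.single i (Pi.single α 1))

lemma pdX_eq {H : Jet k n → ℝ} {z : Jet k n} (hH : DifferentiableAt ℝ H z) (α : Fin k) :
    pdX H α z = fderiv ℝ H z (eX α) := by
  have hc : HasDerivAt (fun t : ℝ => ((Function.update z.1 α t, z.2.1, z.2.2) : Jet k n))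
      (eX α) (z.1 α) :=
    (hasDerivAt_update z.1 α (z.1 α)).prodMk (hasDerivAt_const _ _)
  have hH' : HasFDerivAt H (fderiv ℝ H z) z := hH.hasFDerivAt
  have : HasDerivAt (fun t : ℝ => H (Function.update z.1 α t, z.2.1, z.2.2))
      (fderiv ℝ H z (eX α)) (z.1 α) := by
    have h := hH'.comp_hasDerivAt_of_eq (z.1 α) hc (by simp)
    simpa [Function.update_eq_self, Function.comp_def] using h
  exact this.deriv

lemma pdQ_eq {H : Jet k n → ℝ} {z : Jet k n} (hH : DifferentiableAt ℝ H z) (i : Fin n) :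
    pdQ H i z = fderiv ℝ H z (eQ i) := by
  have hc : HasDerivAt (fun t : ℝ => ((z.1, Function.update z.2.1 i t, z.2.2) : Jet k n))
      (eQ i) (z.2.1 i) :=
    (hasDerivAt_const _ _).prodMk ((hasDerivAt_update z.2.1 i (z.2.1 i)).prodMk
      (hasDerivAt_const _ _))
  have hH' : HasFDerivAt H (fderiv ℝ H z) z := hH.hasFDerivAt
  have : HasDerivAt (fun t : ℝ => H (z.1, Function.update z.2.1 i t, z.2.2))
      (fderiv ℝ H z (eQ i)) (z.2.1 i) := by
    have h := hH'.comp_hasDerivAt_of_eq (z.2.1 i) hc (by simp)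
    simpa [Function.update_eq_self, Function.comp_def] using h
  exact this.deriv

lemma pdV_eq {H : Jet k n → ℝ} {z : Jet k n} (hH : DifferentiableAt ℝ H z)
    (i : Fin n) (α : Fin k) :
    pdV H i α z = fderiv ℝ H z (eV i α) := by
  have hupd : HasDerivAt (fun t : ℝ =>
      Function.update z.2.2 i (Function.update (z.2.2 i) α t))
      (Pi.single i (Pi.single α 1)) (z.2.2 i α) := by
    have h1 : HasDerivAt (fun t : ℝ => Function.update (z.2.2 i) α t)
        (Pi.single α 1) (z.2.2 i α) := hasDerivAt_update _ _ _
    have h2 : ∀ j : Fin n, HasDerivAt (fun t : ℝ =>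
        Function.update z.2.2 i (Function.update (z.2.2 i) α t) j)
        ((Pi.single i (Pi.single α 1) : Fin n → Fin k → ℝ) j) (z.2.2 i α) := by
      intro j
      rcases eq_or_ne j i with rfl | hj
      · simpa using h1
      · simpa [Function.update_of_ne hj, Pi.single_apply, hj] using
          hasDerivAt_const (z.2.2 i α) (z.2.2 j)
    exact hasDerivAt_pi.2 h2
  have hc : HasDerivAt (fun t : ℝ => ((z.1, z.2.1,
      Function.update z.2.2 i (Function.update (z.2.2 i) α t)) : Jet k n))
      (eV i α) (z.2.2 i α) :=
    (hasDerivAt_const _ _).prodMk ((hasDerivAt_const _ _).prodMk hupd)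
  have hH' : HasFDerivAt H (fderiv ℝ H z) z := hH.hasFDerivAt
  have : HasDerivAt (fun t : ℝ => H (z.1, z.2.1,
      Function.update z.2.2 i (Function.update (z.2.2 i) α t)))
      (fderiv ℝ H z (eV i α)) (z.2.2 i α) := by
    have h := hH'.comp_hasDerivAt_of_eq (z.2.2 i α) hc (by simp)
    simpa [Function.update_eq_self, Function.comp_def] using h
  exact this.deriv

lemma pD_eq {φ : (Fin k → ℝ) → (Fin n → ℝ)} (hφ : Differentiable ℝ φ)
    (i : Fin n) (α : Fin k) (x : Fin k → ℝ) :
    pD φ i α x = fderiv ℝ φ x (Pi.single α 1) i := by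
  have hc : HasDerivAt (fun t : ℝ => Function.update x α t) (Pi.single α 1) (x α) :=
    hasDerivAt_update _ _ _
  have hφ' : HasFDerivAt φ (fderiv ℝ φ x) x := (hφ x).hasFDerivAt
  have h : HasDerivAt (fun t : ℝ => φ (Function.update x α t))
      (fderiv ℝ φ x (Pi.single α 1)) (x α) := by
    have h := hφ'.comp_hasDerivAt_of_eq (x α) hc (by simp)
    simpa [Function.update_eq_self, Function.comp_def] using h
  have h2 : HasDerivAt (fun t : ℝ => φ (Function.update x α t) i)
      (fderiv ℝ φ x (Pi.single α 1) i) (x α) :=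
    (hasDerivAt_pi.1 h) i
  exact h2.deriv

lemma clm_decomp (f : Jet k n →L[ℝ] ℝ) (w : Jet k n) :
    f w = (∑ α, w.1 α * f (eX α)) + (∑ i, w.2.1 i * f (eQ i))
      + ∑ i, ∑ β, w.2.2 i β * f (eV i β) := by
  have hw : w = ((∑ α, w.1 α • eX α) + (∑ i, w.2.1 i • eQ i)
      + ∑ i, ∑ β, w.2.2 i β • eV i β : Jet k n) := by
    refine Prod.ext ?_ (Prod.ext ?_ ?_)
    · funext j
      simp [eX, eQ, eV, Prod.fst_sum, Prod.snd_sum, Finset.sum_apply,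
        Pi.single_apply, mul_ite]
    · funext j
      simp [eX, eQ, eV, Prod.fst_sum, Prod.snd_sum, Finset.sum_apply,
        Pi.single_apply, mul_ite]
    · funext j γ
      simp [eX, eQ, eV, Prod.fst_sum, Prod.snd_sum, Finset.sum_apply,
        Pi.single_apply, mul_ite]
  conv_lhs => rw [hw]
  simp [map_add, map_sum, map_smul, smul_eq_mul]

/-- Smoothness of the `v`-part of the prolongation. -/
lemma contDiff_pDfun {φ : (Fin k → ℝ) → (Fin n → ℝ)} (hφ : ContDiff ℝ (⊤ : ℕ∞) φ) :
    ContDiff ℝ (⊤ : ℕ∞) (fun y => (fun i β => pD φ i β y : Fin n → Fin k → ℝ)) := by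
  refine contDiff_pi.2 fun i => contDiff_pi.2 fun β => ?_
  have h1 : ContDiff ℝ (⊤ : ℕ∞) (fun y => fderiv ℝ φ y (Pi.single β 1)) :=
    (hφ.fderiv_right (by exact_mod_cast le_top)).clm_apply contDiff_const
  have h2 : ContDiff ℝ (⊤ : ℕ∞) (fun y => fderiv ℝ φ y (Pi.single β 1) i) :=
    contDiff_pi.1 h1 i
  have : (fun y => pD φ i β y) = fun y => fderiv ℝ φ y (Pi.single β 1) i :=
    funext fun y => pD_eq (hφ.differentiable (by simp)) i β y
  rw [this]; exact h2

/-- Chain rule: the derivative of `H ∘ j¹φ` along `xᵅ` is `D_α H`. -/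
lemma hasDerivAt_Dalong {H : Jet k n → ℝ} (hH : ContDiff ℝ (⊤ : ℕ∞) H)
    {φ : (Fin k → ℝ) → (Fin n → ℝ)} (hφ : ContDiff ℝ (⊤ : ℕ∞) φ)
    (x : Fin k → ℝ) (α : Fin k) :
    HasDerivAt (fun t => H (j1 φ (Function.update x α t))) (Dalong φ x α H) (x α) := by
  set V : (Fin k → ℝ) → Fin n → Fin k → ℝ := fun y i β => pD φ i β y with hVdef
  have hVs : ContDiff ℝ (⊤ : ℕ∞) V := contDiff_pDfun hφ
  have hφ' : HasFDerivAt φ (fderiv ℝ φ x) x := (hφ.differentiable (by simp) x).hasFDerivAt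
  have hV' : HasFDerivAt V (fderiv ℝ V x) x := (hVs.differentiable (by simp) x).hasFDerivAt
  have hj : HasFDerivAt (j1 φ)
      ((ContinuousLinearMap.id ℝ (Fin k → ℝ)).prod ((fderiv ℝ φ x).prod (fderiv ℝ V x))) x :=
    (hasFDerivAt_id x).prodMk (hφ'.prodMk hV')
  have hc : HasDerivAt (fun t : ℝ => Function.update x α t) (Pi.single α 1) (x α) :=
    hasDerivAt_update _ _ _
  have hcomp : HasDerivAt (fun t => j1 φ (Function.update x α t))
      ((Pi.single α 1, fderiv ℝ φ x (Pi.single α 1), fderiv ℝ V x (Pi.single α 1)) : Jet k n)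
      (x α) := by
    have h := hj.comp_hasDerivAt_of_eq (x α) hc (by simp)
    simpa [Function.update_eq_self, Function.comp_def] using h
  have hH' : HasFDerivAt H (fderiv ℝ H (j1 φ x)) (j1 φ x) :=
    (hH.differentiable (by simp) (j1 φ x)).hasFDerivAt
  have hfin : HasDerivAt (fun t => H (j1 φ (Function.update x α t)))
      (fderiv ℝ H (j1 φ x)
        ((Pi.single α 1, fderiv ℝ φ x (Pi.single α 1), fderiv ℝ V x (Pi.single α 1)) : Jet k n))
      (x α) := by
    have h := hH'.comp_hasDerivAt_of_eq (x α) hcomp (by simp)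
    simpa [Function.comp_def] using h
  -- identify the derivative with Dalong
  have hVcurve : HasDerivAt (fun t => V (Function.update x α t))
      (fderiv ℝ V x (Pi.single α 1)) (x α) := by
    have h := hV'.comp_hasDerivAt_of_eq (x α) hc (by simp)
    simpa [Function.update_eq_self, Function.comp_def] using h
  have hpD2 : ∀ (i : Fin n) (β : Fin k),
      pD2 φ i α β x = fderiv ℝ V x (Pi.single α 1) i β := by
    intro i β
    have h1 : HasDerivAt (fun t => V (Function.update x α t) i)
        (fderiv ℝ V x (Pi.single α 1) i) (x α) := (hasDerivAt_pi.1 hVcurve) i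
    have h2 : HasDerivAt (fun t => V (Function.update x α t) i β)
        (fderiv ℝ V x (Pi.single α 1) i β) (x α) := (hasDerivAt_pi.1 h1) β
    exact h2.deriv
  have hDiff : DifferentiableAt ℝ H (j1 φ x) := hH.differentiable (by simp) (j1 φ x)
  have key : fderiv ℝ H (j1 φ x)
      ((Pi.single α 1, fderiv ℝ φ x (Pi.single α 1), fderiv ℝ V x (Pi.single α 1)) : Jet k n)
      = Dalong φ x α H := by
    rw [clm_decomp]
    have e1 : (∑ β, (Pi.single α (1:ℝ) : Fin k → ℝ) β * fderiv ℝ H (j1 φ x) (eX β)) = pdX H α (j1 φ x) := by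
      simp only [Pi.single_apply, ite_mul, one_mul, zero_mul, Finset.sum_ite_eq',
        Finset.mem_univ, if_true]
      exact (pdX_eq hDiff α).symm
    have e2 : (∑ i, fderiv ℝ φ x (Pi.single α 1) i * fderiv ℝ H (j1 φ x) (eQ i))
        = ∑ j, pD φ j α x * pdQ H j (j1 φ x) := by
      refine Finset.sum_congr rfl fun i _ => ?_
      rw [← pD_eq (hφ.differentiable (by simp)) i α x, ← pdQ_eq hDiff]
    have e3 : (∑ i, ∑ β, fderiv ℝ V x (Pi.single α 1) i β * fderiv ℝ H (j1 φ x) (eV i β))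
        = ∑ j, ∑ β, pD2 φ j α β x * pdV H j β (j1 φ x) := by
      refine Finset.sum_congr rfl fun i _ => Finset.sum_congr rfl fun β _ => ?_
      rw [← hpD2 i β, ← pdV_eq hDiff]
    rw [e1, e2, e3]
    rfl
  rw [key] at hfin
  exact hfin

/-- `∂L/∂vⁱ_α` is smooth when `L` is. -/
lemma contDiff_pdV {L : Jet k n → ℝ} (hL : ContDiff ℝ (⊤ : ℕ∞) L) (i : Fin n) (α : Fin k) :
    ContDiff ℝ (⊤ : ℕ∞) (pdV L i α) := by
  have : pdV L i α = fun z => fderiv ℝ L z (eV i α) :=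
    funext fun z => pdV_eq (hL.differentiable (by simp) z) i α
  rw [this]
  exact (hL.fderiv_right (by exact_mod_cast le_top)).clm_apply contDiff_const

end Auxiliary
/-- Noether's theorem for generalized symmetries: if `X` is a
generalized symmetry of `L`, i.e. `d_{X⁽¹⁾}L = d_{T⁽¹⁾_α}Fᵅ` along second jets of
solutions, then `Gᵅ = Fᵅ − Xⁱ ∂L/∂vⁱ_α` defines a conservation law. -/
theorem statement9 (k n : ℕ) (hk : 1 ≤ k) (hn : 1 ≤ n)
    (L : Jet k n → ℝ) (hL : ContDiff ℝ (⊤ : ℕ∞) L)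
    (X : Fin n → Jet k n → ℝ) (hX : ∀ i, ContDiff ℝ (⊤ : ℕ∞) (X i))
    (F : Fin k → Jet k n → ℝ) (hF : ∀ α, ContDiff ℝ (⊤ : ℕ∞) (F α))
    (hsym : ∀ φ : (Fin k → ℝ) → (Fin n → ℝ), IsELSolution L φ →
      ∀ x : Fin k → ℝ,
        (∑ i : Fin n, X i (j1 φ x) * pdQ L i (j1 φ x))
        + (∑ i : Fin n, ∑ α : Fin k, Dalong φ x α (X i) * pdV L i α (j1 φ x))
        = ∑ α : Fin k, Dalong φ x α (F α)) :
    IsConservationLaw L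
      (fun α z => F α z - ∑ i : Fin n, X i z * pdV L i α z) := by
  intro φ hφsol x
  obtain ⟨hφ, hEL⟩ := hφsol
  have hF' : ∀ α : Fin k, HasDerivAt (fun t => F α (j1 φ (Function.update x α t)))
      (Dalong φ x α (F α)) (x α) := fun α => hasDerivAt_Dalong (hF α) hφ x α
  have hX' : ∀ (α : Fin k) (i : Fin n),
      HasDerivAt (fun t => X i (j1 φ (Function.update x α t)))
      (Dalong φ x α (X i)) (x α) := fun α i => hasDerivAt_Dalong (hX i) hφ x α
  have hV' : ∀ (α : Fin k) (i : Fin n),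
      HasDerivAt (fun t => pdV L i α (j1 φ (Function.update x α t)))
      (Dalong φ x α (pdV L i α)) (x α) :=
    fun α i => hasDerivAt_Dalong (contDiff_pdV hL i α) hφ x α
  have hG : ∀ α : Fin k,
      deriv (fun t => F α (j1 φ (Function.update x α t))
        - ∑ i, X i (j1 φ (Function.update x α t)) * pdV L i α (j1 φ (Function.update x α t)))
          (x α)
      = Dalong φ x α (F α)
        - ∑ i, (Dalong φ x α (X i) * pdV L i α (j1 φ x)
            + X i (j1 φ x) * Dalong φ x α (pdV L i α)) := by
    intro α
    have hprod : ∀ i : Fin n, HasDerivAt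
        (fun t => X i (j1 φ (Function.update x α t)) * pdV L i α (j1 φ (Function.update x α t)))
        (Dalong φ x α (X i) * pdV L i α (j1 φ x)
          + X i (j1 φ x) * Dalong φ x α (pdV L i α)) (x α) := by
      intro i
      have h := (hX' α i).mul (hV' α i)
      simpa [Function.update_eq_self, Pi.mul_def] using h
    have hsum : HasDerivAt
        (fun t => ∑ i, X i (j1 φ (Function.update x α t))
          * pdV L i α (j1 φ (Function.update x α t)))
        (∑ i, (Dalong φ x α (X i) * pdV L i α (j1 φ x)
          + X i (j1 φ x) * Dalong φ x α (pdV L i α))) (x α) :=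
      HasDerivAt.fun_sum fun i _ => hprod i
    exact ((hF' α).sub hsum).deriv
  have hgoal : (∑ α : Fin k, deriv (fun t =>
      F α (j1 φ (Function.update x α t))
        - ∑ i, X i (j1 φ (Function.update x α t)) * pdV L i α (j1 φ (Function.update x α t)))
        (x α)) = 0 := by
    rw [Finset.sum_congr rfl fun α _ => hG α]
    rw [Finset.sum_sub_distrib]
    have hswap : (∑ α : Fin k, ∑ i : Fin n, (Dalong φ x α (X i) * pdV L i α (j1 φ x)
        + X i (j1 φ x) * Dalong φ x α (pdV L i α)))
        = (∑ i : Fin n, ∑ α : Fin k, Dalong φ x α (X i) * pdV L i α (j1 φ x))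
          + ∑ i : Fin n, X i (j1 φ x) * pdQ L i (j1 φ x) := by
      rw [Finset.sum_comm, ← Finset.sum_add_distrib]
      refine Finset.sum_congr rfl fun i _ => ?_
      rw [Finset.sum_add_distrib, ← Finset.mul_sum]
      congr 1
      have hELi : (∑ α : Fin k, Dalong φ x α (pdV L i α)) = pdQ L i (j1 φ x) := by
        rw [← hEL i x]
        exact Finset.sum_congr rfl fun α _ => ((hV' α i).deriv).symm
      rw [hELi]
    rw [hswap, ← hsym φ ⟨hφ, hEL⟩ x]
    ring
  exact hgoal
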